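/- Let R = K[x] and P_n the two-term complex R --x^n--> R in degrees -1, 0. For positive integers m, n, let y^i_{m,n}: P_m → P_n[1] (for i ≤ m) be the morphism represented by the chain map whose only nonzero component is multiplication by x^{m-i} from the degree -1 term of P_m to the degree 0 term of P_n[1] (the complex R --(-x^n)--> R in degrees -2, -1). Then y^i_{m,n} = 0 whenever i ≤ max(0, m-n), and {y^i_{m,n} : max(0, m-n) < i ≤ m} is a K-basis of Hom_{K^b(proj R)}(P_m, P_n[1]). -/

import Mathlib

/- Setup: `R = K[x]`, the two-term cochain complexes `P n = (R --x^n--> R)` in degrees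
`-1, 0`, and the morphisms `x^i_{m,n}` and `y^i_{m,n}` in the bounded homotopy category
`K^b(proj R)` (realized inside the homotopy category of cochain complexes of
`R`-modules). -/

noncomputable section
open CategoryTheory CategoryTheory.Limits Polynomial ZeroObject CategoryTheory.Pretriangulated

variable (K : Type) [Field K]

abbrev RMod := ModuleCat.of (Polynomial K) (Polynomial K)

/-- Multiplication by `x^a` on `R = K[x]`. -/
def mulX (a : ℕ) : RMod K ⟶ RMod K :=
  ModuleCat.ofHom (LinearMap.mulLeft (Polynomial K) ((X : Polynomial K) ^ a))

lemma mulX_comp (a b : ℕ) : mulX K a ≫ mulX K b = mulX K (a + b) := by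
  ext p
  simp only [mulX, ModuleCat.hom_comp, ModuleCat.hom_ofHom, LinearMap.comp_apply,
    LinearMap.mulLeft_apply]
  ring_nf

/-- The graded pieces of the two-term complexes `P n`. -/
def Pobj : ℤ → ModuleCat (Polynomial K) := fun i =>
  if i = -1 ∨ i = 0 then RMod K else ModuleCat.of (Polynomial K) PUnit

lemma PobjNeg : Pobj K (-1) = RMod K := by simp [Pobj]
lemma PobjZero : Pobj K 0 = RMod K := by simp [Pobj]

/-- The differential of `P n`. -/
def Pd (n : ℕ) : ∀ i : ℤ, Pobj K i ⟶ Pobj K (i + 1) := fun i =>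
  if h : i = -1 then
    eqToHom (by rw [h, PobjNeg]) ≫ mulX K n ≫ eqToHom (by rw [h]; norm_num [PobjZero])
  else 0

/-- The two-term complex `P n = (R --x^n--> R)` in degrees `-1, 0`. -/
def P (n : ℕ) : CochainComplex (ModuleCat (Polynomial K)) ℤ :=
  CochainComplex.of (Pobj K) (Pd K n) (fun i => by
    by_cases h : i = -1
    · have h2 : Pd K n (i + 1) = 0 := dif_neg (by omega)
      rw [h2, Limits.comp_zero]
    · have h1 : Pd K n i = 0 := dif_neg h
      rw [h1, Limits.zero_comp])

lemma P_d_eq_zero (n : ℕ) (i j : ℤ) (hi : i ≠ -1) : (P K n).d i j = 0 := by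
  by_cases h : i + 1 = j
  · subst h
    show CochainComplex.of.d (Pobj K) (Pd K n) i (i + 1) = 0
    rw [CochainComplex.of_d]
    exact dif_neg hi
  · exact HomologicalComplex.shape _ _ _ (by simpa using h)

/-- The components of the chain map which is multiplication by `x^a` in degree `-1`
and by `x^b` in degree `0`. -/
def xComp (a b : ℕ) : ∀ i : ℤ, Pobj K i ⟶ Pobj K i := fun i =>
  if h : i = -1 then eqToHom (by rw [h, PobjNeg]) ≫ mulX K a ≫ eqToHom (by rw [h, PobjNeg])
  else if h0 : i = 0 then
    eqToHom (by rw [h0, PobjZero]) ≫ mulX K b ≫ eqToHom (by rw [h0, PobjZero])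
  else 0

/-- The chain map `P m ⟶ P n` which is multiplication by `x^a` in degree `-1` and by
`x^b` in degree `0`; it commutes with the differentials since `a + n = b + m`. -/
def xMap (m n a b : ℕ) (hab : a + n = b + m) : P K m ⟶ P K n :=
  CochainComplex.ofHom (xComp K a b) (by
    intro i
    have hdn : (P K n).d i (i + 1) = Pd K n i := by
      show CochainComplex.of.d (Pobj K) (Pd K n) i (i + 1) = _
      rw [CochainComplex.of_d]
    have hdm : (P K m).d i (i + 1) = Pd K m i := by
      show CochainComplex.of.d (Pobj K) (Pd K m) i (i + 1) = _
      rw [CochainComplex.of_d]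
    rw [hdn, hdm]
    by_cases hi : i = -1
    · subst hi
      show xComp K a b (-1) ≫ Pd K n (-1) = Pd K m (-1) ≫ xComp K a b (-1 + 1)
      rw [show xComp K a b (-1 + 1) = xComp K a b 0 from rfl]
      rw [show xComp K a b (-1) = eqToHom (PobjNeg K) ≫ mulX K a ≫ eqToHom (PobjNeg K).symm
          from dif_pos rfl]
      rw [show xComp K a b 0 = eqToHom (PobjZero K) ≫ mulX K b ≫ eqToHom (PobjZero K).symm
          from by rw [xComp, dif_neg (by norm_num), dif_pos rfl]]
      rw [show Pd K n (-1) = eqToHom (PobjNeg K) ≫ mulX K n ≫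
            eqToHom (by norm_num [PobjZero] : RMod K = Pobj K (-1 + 1))
          from dif_pos rfl]
      rw [show Pd K m (-1) = eqToHom (PobjNeg K) ≫ mulX K m ≫
            eqToHom (by norm_num [PobjZero] : RMod K = Pobj K (-1 + 1))
          from dif_pos rfl]
      simp only [Category.assoc, eqToHom_trans_assoc, eqToHom_refl, Category.id_comp]
      try simp only [Category.comp_id]
      rw [← Category.assoc (mulX K a), mulX_comp, ← Category.assoc (mulX K m), mulX_comp, hab,
        Nat.add_comm b m]
      try rfl
    · have h1 : Pd K m i = 0 := dif_neg hi
      have h2 : Pd K n i = 0 := dif_neg hi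
      rw [h1, h2]
      exact Limits.comp_zero.trans Limits.zero_comp.symm)

/-- The components of `y^i_{m,n}`. -/
def yComp (m n a : ℕ) : ∀ i : ℤ, (P K m).X i ⟶ ((P K n)⟦(1 : ℤ)⟧).X i := fun i =>
  if h : i = -1 then
    eqToHom (by rw [h]; exact PobjNeg K) ≫ mulX K a ≫
      eqToHom (by rw [h]; show RMod K = Pobj K (-1 + 1); norm_num [PobjZero])
  else 0

/-- The chain map `P m ⟶ (P n)⟦1⟧` whose only nonzero component is multiplication by
`x^a` in degree `-1` (landing in the degree `0` part of `P n`). -/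
def yMap (m n a : ℕ) : P K m ⟶ (P K n)⟦(1 : ℤ)⟧ where
  f := yComp K m n a
  comm' := fun i j hij => by
    have hj : i + 1 = j := hij
    have hY : ∀ i' j' : ℤ, i' ≠ -2 → ((P K n)⟦(1 : ℤ)⟧).d i' j' = 0 := fun i' j' h => by
      rw [CochainComplex.shiftFunctor_obj_d',
        P_d_eq_zero K n _ _ (by change i' + 1 ≠ -1; omega), smul_zero]
      rfl
    by_cases hi : i = -1
    · rw [hY i j (by omega), Limits.comp_zero,
        show yComp K m n a j = 0 from dif_neg (by omega), Limits.comp_zero]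
    · rw [show yComp K m n a i = 0 from dif_neg hi, Limits.zero_comp]
      by_cases hj' : j = -1
      · rw [P_d_eq_zero K m i j hi, Limits.zero_comp]
      · rw [show yComp K m n a j = 0 from dif_neg hj', Limits.comp_zero]

/-- The homotopy category of cochain complexes of `K[x]`-modules, in which the bounded
homotopy category of finitely generated projectives embeds fully faithfully. -/
abbrev KbT := HomotopyCategory (ModuleCat (Polynomial K)) (ComplexShape.up ℤ)

abbrev Q : CochainComplex (ModuleCat (Polynomial K)) ℤ ⥤ KbT K :=
  HomotopyCategory.quotient _ _

/-- `P n` as an object of the homotopy category. -/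
abbrev Pbar (n : ℕ) : KbT K := (Q K).obj (P K n)

/-- The morphism `x^i_{m,n} : P m ⟶ P n` in the homotopy category, defined for
`max (0, n - m) ≤ i` (expressed with truncated subtraction on `ℕ`); in degree `-1` it is
multiplication by `x^(i+m-n)` and in degree `0` multiplication by `x^i`. -/
def xbar (m n i : ℕ) (h : n - m ≤ i) : Pbar K m ⟶ Pbar K n :=
  (Q K).map (xMap K m n (i + m - n) i (by omega))

/-- The identification `Q(P n ⟦1⟧) ≅ (Q (P n))⟦1⟧` in the homotopy category. -/
def shIso (n : ℕ) : (Q K).obj ((P K n)⟦(1 : ℤ)⟧) ≅ (Pbar K n)⟦(1 : ℤ)⟧ :=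
  ((Q K).commShiftIso (1 : ℤ)).app (P K n)

/-- The morphism `y^i_{m,n} : P m ⟶ (P n)[1]` in the homotopy category, defined for
`i ≤ m`; its only nonzero component is multiplication by `x^(m-i)` in degree `-1`. -/
def ybar (m n i : ℕ) (_h : i ≤ m) : Pbar K m ⟶ (Pbar K n)⟦(1 : ℤ)⟧ :=
  (Q K).map (yMap K m n (m - i)) ≫ (shIso K n).hom

/-- Multiplication by a polynomial `p`. -/
def mulP (p : Polynomial K) : RMod K ⟶ RMod K :=
  ModuleCat.ofHom (LinearMap.mulLeft (Polynomial K) p)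

lemma mulX_eq_mulP (a : ℕ) : mulX K a = mulP K ((X : Polynomial K) ^ a) := rfl

/-- Extensionality via the identification of `RMod K ⟶ RMod K` with linear endomorphisms. -/
lemma lin_ext (f g : RMod K ⟶ RMod K)
    (h : ∀ r : Polynomial K, f r = g r) : f = g := ModuleCat.hom_ext (LinearMap.ext h)

lemma mulP_apply (p r : Polynomial K) : mulP K p r = p * r := rfl

/-- Evaluation of an endomorphism of `R` at `1`. -/
def ev (f : RMod K ⟶ RMod K) : Polynomial K := f (1 : Polynomial K)

lemma eq_mulP (f : RMod K ⟶ RMod K) : f = mulP K (ev K f) := by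
  apply lin_ext
  intro r
  have h : f ((r : Polynomial K) * 1) = (r : Polynomial K) • f (1 : Polynomial K) := by
    rw [← smul_eq_mul]; exact f.hom.map_smul r (1 : Polynomial K)
  rw [mul_one] at h
  rw [h, mulP_apply]
  show (r : Polynomial K) * ev K f = ev K f * r
  ring
lemma mulP_comp (p q : Polynomial K) : mulP K p ≫ mulP K q = mulP K (q * p) := by
  apply lin_ext
  intro r
  show (q * (p * r) : Polynomial K) = (q * p) * r
  ring

lemma mulP_add (p q : Polynomial K) : mulP K (p + q) = mulP K p + mulP K q := by
  apply lin_ext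
  intro r
  show ((p + q) * r : Polynomial K) = p * r + q * r
  ring

lemma mulP_sub (p q : Polynomial K) : mulP K (p - q) = mulP K p - mulP K q := by
  apply lin_ext
  intro r
  show ((p - q) * r : Polynomial K) = p * r - q * r
  ring

lemma mulP_smul (k : K) (p : Polynomial K) : mulP K (k • p) = k • mulP K p := by
  apply lin_ext
  intro r
  show ((k • p) * r : Polynomial K) = k • (p * r)
  rw [Algebra.smul_def, Algebra.smul_def]
  ring

lemma ev_mulP (p : Polynomial K) : ev K (mulP K p) = p := by
  show p * 1 = p; ring

lemma isZero_Pobj (i : ℤ) (h : ¬(i = -1 ∨ i = 0)) : IsZero (Pobj K i) := by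
  have e : Pobj K i = ModuleCat.of (Polynomial K) PUnit := by
    simp only [Pobj]; rw [if_neg h]
  rw [e]
  exact ModuleCat.isZero_of_subsingleton _

lemma isZero_PX (n : ℕ) (i : ℤ) (h : ¬(i = -1 ∨ i = 0)) : IsZero ((P K n).X i) :=
  isZero_Pobj K i h

lemma isZero_DX (n : ℕ) (i : ℤ) (h : ¬(i + 1 = -1 ∨ i + 1 = 0)) :
    IsZero (((P K n)⟦(1 : ℤ)⟧).X i) :=
  isZero_Pobj K (i + 1) h

-- canonical object identifications
lemma e1 (m : ℕ) : (P K m).X (-1) = RMod K := rfl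
lemma e0 (m : ℕ) : (P K m).X 0 = RMod K := rfl
lemma e2 (n : ℕ) : RMod K = ((P K n)⟦(1 : ℤ)⟧).X (-1) := rfl
lemma e3 (n : ℕ) : ((P K n)⟦(1 : ℤ)⟧).X (-2) = RMod K := rfl

lemma P_d_neg_one (n : ℕ) :
    (P K n).d (-1) 0 = eqToHom (e1 K n) ≫ mulX K n ≫ eqToHom (e0 K n).symm := by
  show (P K n).d (-1) (-1 + 1) = _
  rw [show (P K n).d (-1) (-1+1) = Pd K n (-1) by
    show CochainComplex.of.d (Pobj K) (Pd K n) (-1) (-1 + 1) = _; rw [CochainComplex.of_d]]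
  exact dif_pos rfl

lemma D_d (n : ℕ) :
    ((P K n)⟦(1 : ℤ)⟧).d (-2) (-1) =
      eqToHom (e3 K n) ≫ (-(mulX K n)) ≫ eqToHom (e2 K n) := by
  rw [CochainComplex.shiftFunctor_obj_d']
  show (1 : ℤ).negOnePow • (P K n).d (-2 + 1) (-1 + 1) = _
  rw [show (P K n).d (-2+1) (-1+1) = (P K n).d (-1) 0 from rfl, P_d_neg_one,
    Int.negOnePow_one]
  apply lin_ext
  intro r
  show (-1 : ℤˣ) • ((X : Polynomial K) ^ n * r) = -(X ^ n * r)
  simp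
/-- The components of the generalized `y`-morphism with polynomial `p`. -/
def yPf (m n : ℕ) (p : Polynomial K) :
    ∀ i : ℤ, (P K m).X i ⟶ ((P K n)⟦(1 : ℤ)⟧).X i := fun i =>
  if h : i = -1 then
    eqToHom (by rw [h]; exact PobjNeg K) ≫ mulP K p ≫
      eqToHom (by rw [h]; show RMod K = Pobj K (-1 + 1); norm_num [PobjZero])
  else 0

/-- The generalized `y`-morphism: multiplication by `p` in degree `-1`. -/
def yP (m n : ℕ) (p : Polynomial K) : P K m ⟶ (P K n)⟦(1 : ℤ)⟧ where
  f := yPf K m n p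
  comm' := fun i j hij => by
    have hj : i + 1 = j := hij
    have hY : ∀ i' j' : ℤ, i' ≠ -2 → ((P K n)⟦(1 : ℤ)⟧).d i' j' = 0 := fun i' j' h => by
      rw [CochainComplex.shiftFunctor_obj_d',
        P_d_eq_zero K n _ _ (by change i' + 1 ≠ -1; omega), smul_zero]
      rfl
    by_cases hi : i = -1
    · rw [hY i j (by omega), Limits.comp_zero,
        show yPf K m n p j = 0 from dif_neg (by omega), Limits.comp_zero]
    · rw [show yPf K m n p i = 0 from dif_neg hi, Limits.zero_comp]
      by_cases hj' : j = -1
      · rw [P_d_eq_zero K m i j hi, Limits.zero_comp]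
      · rw [show yPf K m n p j = 0 from dif_neg hj', Limits.comp_zero]

lemma yMap_eq_yP (m n a : ℕ) : yMap K m n a = yP K m n ((X : Polynomial K) ^ a) := rfl

lemma yP_f_neg_one (m n : ℕ) (p : Polynomial K) :
    (yP K m n p).f (-1) = eqToHom (e1 K m) ≫ mulP K p ≫ eqToHom (e2 K n) := by
  show yPf K m n p (-1) = _
  rw [yPf]
  exact dif_pos rfl

lemma yP_f_eq_zero (m n : ℕ) (p : Polynomial K) (i : ℤ) (h : i ≠ -1) :
    (yP K m n p).f i = 0 := by
  show yPf K m n p i = 0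
  rw [yPf]
  exact dif_neg h

lemma yP_add (m n : ℕ) (p q : Polynomial K) :
    yP K m n (p + q) = yP K m n p + yP K m n q := by
  apply HomologicalComplex.hom_ext
  intro i
  rw [HomologicalComplex.add_f_apply]
  by_cases h : i = -1
  · subst h
    rw [yP_f_neg_one, yP_f_neg_one, yP_f_neg_one, mulP_add]
    simp [Preadditive.add_comp, Preadditive.comp_add]
    rfl
  · rw [yP_f_eq_zero K m n _ i h, yP_f_eq_zero K m n _ i h, yP_f_eq_zero K m n _ i h,
      add_zero]

lemma yP_smul (m n : ℕ) (k : K) (p : Polynomial K) :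
    yP K m n (k • p) = k • yP K m n p := by
  apply HomologicalComplex.hom_ext
  intro i
  rw [HomologicalComplex.smul_f_apply]
  by_cases h : i = -1
  · subst h
    rw [yP_f_neg_one, yP_f_neg_one, mulP_smul]
    rw [← Linear.comp_smul, ← Linear.smul_comp]; congr 2; apply lin_ext; intro r
    show k • (p * r) = algebraMap K (Polynomial K) k • (p * r)
    rw [Algebra.smul_def, smul_eq_mul]
  · rw [yP_f_eq_zero K m n _ i h, yP_f_eq_zero K m n _ i h, smul_zero]
lemma exists_yP {m n : ℕ} (f : P K m ⟶ (P K n)⟦(1 : ℤ)⟧) :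
    ∃ p : Polynomial K, f = yP K m n p := by
  refine ⟨ev K (eqToHom (e1 K m).symm ≫ f.f (-1) ≫ eqToHom (e2 K n).symm), ?_⟩
  apply HomologicalComplex.hom_ext
  intro i
  by_cases h : i = -1
  · subst h
    rw [yP_f_neg_one, ← eq_mulP]
    simp
    rfl
  · rw [yP_f_eq_zero K m n _ i h]
    by_cases h2 : i < -1
    · exact (isZero_PX K m i (by omega)).eq_of_src _ _
    · exact (isZero_DX K n i (by omega)).eq_of_tgt _ _

/-- The `K`-linear map sending `p` to the class of the generalized `y`-morphism. -/
def psi (m n : ℕ) : Polynomial K →ₗ[K] ((Pbar K m) ⟶ (Pbar K n)⟦(1 : ℤ)⟧) where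
  toFun p := (Q K).map (yP K m n p) ≫ (shIso K n).hom
  map_add' p q := by
    rw [yP_add, Functor.map_add, Preadditive.add_comp]
  map_smul' k p := by
    rw [yP_smul, Functor.map_smul, Linear.smul_comp, RingHom.id_apply]

lemma psi_X_pow (m n i : ℕ) (hi : i ≤ m) :
    psi K m n ((X : Polynomial K) ^ (m - i)) = ybar K m n i hi := by
  show (Q K).map (yP K m n ((X : Polynomial K) ^ (m - i))) ≫ (shIso K n).hom = _
  rw [ybar, yMap_eq_yP]
/-- The null-homotopy showing `yP (q * X^m - X^n * r)` is zero in the homotopy category. -/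
def htp (m n : ℕ) (q r : Polynomial K) :
    Homotopy (yP K m n (q * X ^ m - X ^ n * r)) 0 where
  hom i j :=
    if h0 : i = 0 ∧ j = -1 then
      eqToHom (show (P K m).X i = RMod K by rw [h0.1]; exact e0 K m) ≫ mulP K q ≫
        eqToHom (show RMod K = ((P K n)⟦(1 : ℤ)⟧).X j by rw [h0.2]; exact e2 K n)
    else if h1 : i = -1 ∧ j = -2 then
      eqToHom (show (P K m).X i = RMod K by rw [h1.1]; exact e1 K m) ≫ mulP K r ≫
        eqToHom (show RMod K = ((P K n)⟦(1 : ℤ)⟧).X j by rw [h1.2]; exact (e3 K n).symm)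
    else 0
  zero i j hij := by
    have h0 : ¬(i = 0 ∧ j = -1) := by
      rintro ⟨rfl, rfl⟩; exact hij (show (-1 : ℤ) + 1 = 0 by norm_num)
    have h1 : ¬(i = -1 ∧ j = -2) := by
      rintro ⟨rfl, rfl⟩; exact hij (show (-2 : ℤ) + 1 = -1 by norm_num)
    beta_reduce
    rw [dif_neg h0, dif_neg h1]
  comm i := by
    by_cases hi : i = -1
    · subst hi
      rw [dNext_eq _ (show (ComplexShape.up ℤ).Rel (-1) 0 from show (-1 : ℤ) + 1 = 0 by norm_num),
          prevD_eq _ (show (ComplexShape.up ℤ).Rel (-2) (-1) from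
            show (-2 : ℤ) + 1 = -1 by norm_num)]
      rw [dif_pos (⟨rfl, rfl⟩ : (0 : ℤ) = 0 ∧ (-1 : ℤ) = -1)]
      rw [dif_neg (show ¬((-1 : ℤ) = 0 ∧ (-2 : ℤ) = -1) by norm_num),
          dif_pos (⟨rfl, rfl⟩ : (-1 : ℤ) = -1 ∧ (-2 : ℤ) = -2)]
      rw [yP_f_neg_one, P_d_neg_one, D_d, HomologicalComplex.zero_f_apply, add_zero]
      apply lin_ext
      intro s
      show (q * (X ^ m : Polynomial K) - X ^ n * r) * s
          = (q * ((X ^ m : Polynomial K) * s)) + (-((X : Polynomial K) ^ n * (r * s)))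
      ring
    · by_cases h2 : i < -1
      · exact (isZero_PX K m i (by omega)).eq_of_src _ _
      · exact (isZero_DX K n i (by omega)).eq_of_tgt _ _
lemma psi_eq_zero_of (m n : ℕ) (q r : Polynomial K) :
    psi K m n (q * X ^ m - X ^ n * r) = 0 := by
  show (Q K).map (yP K m n (q * X ^ m - X ^ n * r)) ≫ (shIso K n).hom = 0
  rw [show (Q K).map (yP K m n (q * X ^ m - X ^ n * r)) = (Q K).map 0 from
      HomotopyCategory.eq_of_homotopy _ _ (htp K m n q r), Functor.map_zero,
    Limits.zero_comp]

lemma mulP_injective : Function.Injective (mulP K) := by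
  intro p q h
  rw [← ev_mulP K p, ← ev_mulP K q, h]

lemma exists_of_psi_eq_zero {m n : ℕ} {p : Polynomial K} (h : psi K m n p = 0) :
    ∃ q r : Polynomial K, p = q * X ^ m - X ^ n * r := by
  have h0 : (Q K).map (yP K m n p) = 0 := by
    have h1 : ((Q K).map (yP K m n p) ≫ (shIso K n).hom) ≫ (shIso K n).inv =
        0 ≫ (shIso K n).inv := congrArg (fun t => t ≫ (shIso K n).inv) h
    simpa only [Category.assoc, Iso.hom_inv_id, Category.comp_id, Limits.zero_comp] using h1
  have ht : Homotopy (yP K m n p) 0 :=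
    HomotopyCategory.homotopyOfEq _ _ (by rw [h0, Functor.map_zero])
  have hc := ht.comm (-1)
  rw [dNext_eq _ (show (ComplexShape.up ℤ).Rel (-1) 0 from show (-1 : ℤ) + 1 = 0 by norm_num),
      prevD_eq _ (show (ComplexShape.up ℤ).Rel (-2) (-1) from
        show (-2 : ℤ) + 1 = -1 by norm_num),
      yP_f_neg_one, P_d_neg_one, D_d, HomologicalComplex.zero_f_apply, add_zero] at hc
  set a := ev K (eqToHom (e0 K m).symm ≫ ht.hom 0 (-1) ≫ eqToHom (e2 K n).symm) with ha
  set b := ev K (eqToHom (e1 K m).symm ≫ ht.hom (-1) (-2) ≫ eqToHom (e3 K n)) with hb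
  refine ⟨a, b, ?_⟩
  have hq : ht.hom 0 (-1) = eqToHom (e0 K m) ≫ mulP K a ≫ eqToHom (e2 K n) := by
    rw [ha, ← eq_mulP]; simp; rfl
  have hr : ht.hom (-1) (-2) = eqToHom (e1 K m) ≫ mulP K b ≫ eqToHom (e3 K n).symm := by
    rw [hb, ← eq_mulP]; simp; rfl
  rw [hq, hr] at hc
  have hc3 : mulP K p = mulX K m ≫ mulP K a + -(mulP K b ≫ mulX K n) := by
    apply lin_ext; intro s
    exact congrArg (fun t : RMod K ⟶ RMod K => t.hom s) hc
  rw [mulX_eq_mulP, mulX_eq_mulP, mulP_comp, mulP_comp] at hc3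
  apply mulP_injective K
  rw [mulP_sub, sub_eq_add_neg]
  exact hc3
lemma psi_surjective (m n : ℕ) : Function.Surjective (psi K m n) := by
  intro g
  obtain ⟨f, hf⟩ := (Q K).map_surjective (g ≫ (shIso K n).inv)
  obtain ⟨p, hp⟩ := exists_yP K f
  refine ⟨p, ?_⟩
  show (Q K).map (yP K m n p) ≫ (shIso K n).hom = g
  rw [← hp, hf]
  simp

lemma psi_eq_zero_of_dvd (m n : ℕ) {p : Polynomial K}
    (h : (X : Polynomial K) ^ (min m n) ∣ p) : psi K m n p = 0 := by
  obtain ⟨c, rfl⟩ := h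
  rcases le_total m n with hle | hle
  · rw [show (X : Polynomial K) ^ (min m n) * c = c * X ^ m - X ^ n * 0 by
      rw [min_eq_left hle]; ring]
    exact psi_eq_zero_of K m n c 0
  · rw [show (X : Polynomial K) ^ (min m n) * c = 0 * X ^ m - X ^ n * (-c) by
      rw [min_eq_right hle]; ring]
    exact psi_eq_zero_of K m n 0 (-c)

lemma dvd_of_psi_eq_zero {m n : ℕ} {p : Polynomial K} (h : psi K m n p = 0) :
    (X : Polynomial K) ^ (min m n) ∣ p := by
  obtain ⟨q, r, rfl⟩ := exists_of_psi_eq_zero K h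
  exact dvd_sub (dvd_mul_of_dvd_right (pow_dvd_pow X (min_le_left m n)) q)
    (dvd_mul_of_dvd_left (pow_dvd_pow X (min_le_right m n)) r)
/-- `y^i_{m,n} = 0` whenever `i ≤ max (0, m-n)`, and
`{y^i_{m,n} : max (0, m-n) < i ≤ m}` is a `K`-basis of `Hom(P m, (P n)[1])`. -/
theorem ybar_eq_zero_and_basis (m n : ℕ) (hm : 0 < m) (hn : 0 < n) :
    (∀ (i : ℕ) (hi : i ≤ m), i ≤ m - n → ybar K m n i hi = 0) ∧
    ∃ b : Module.Basis {i : ℕ // m - n < i ∧ i ≤ m} K (Pbar K m ⟶ (Pbar K n)⟦(1 : ℤ)⟧),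
      ∀ i : {i : ℕ // m - n < i ∧ i ≤ m}, b i = ybar K m n i.1 i.2.2 := by
  constructor
  · intro i hi hle
    rw [← psi_X_pow K m n i hi]
    exact psi_eq_zero_of_dvd K m n (pow_dvd_pow X (by omega))
  · have hindep : LinearIndependent K
        (fun j : Fin (min m n) => psi K m n ((X : Polynomial K) ^ (j : ℕ))) := by
      rw [Fintype.linearIndependent_iff]
      intro c hc
      have h0 : psi K m n (∑ j : Fin (min m n), c j • (X : Polynomial K) ^ (j : ℕ)) = 0 := by
        rw [map_sum]
        simpa only [map_smul] using hc
      have hdvd := dvd_of_psi_eq_zero K h0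
      rw [Polynomial.X_pow_dvd_iff] at hdvd
      intro j
      have hco := hdvd (j : ℕ) j.2
      rw [Polynomial.finset_sum_coeff, Finset.sum_eq_single j] at hco
      · simpa [Polynomial.coeff_smul, Polynomial.coeff_X_pow] using hco
      · intro b _ hb
        have hne : ¬((j : ℕ) = (b : ℕ)) := fun hh => hb (Fin.ext hh.symm)
        simp [Polynomial.coeff_smul, Polynomial.coeff_X_pow, hne]
      · intro hj; exact absurd (Finset.mem_univ j) hj
    have hspan : ⊤ ≤ Submodule.span K
        (Set.range fun j : Fin (min m n) => psi K m n ((X : Polynomial K) ^ (j : ℕ))) := by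
      rintro g -
      obtain ⟨p, rfl⟩ := psi_surjective K m n g
      have hmod : psi K m n p = psi K m n (p %ₘ X ^ (min m n)) := by
        have hdvd : (X : Polynomial K) ^ (min m n) ∣ (p - p %ₘ X ^ (min m n)) := by
          refine ⟨p /ₘ X ^ (min m n), ?_⟩
          have hh := Polynomial.modByMonic_add_div p ((X : Polynomial K) ^ (min m n))
          linear_combination -hh
        have hz := psi_eq_zero_of_dvd K m n hdvd
        rw [map_sub] at hz
        rw [← sub_eq_zero]
        exact hz
      rw [hmod]
      have hdeg : (p %ₘ X ^ (min m n)).natDegree < min m n := by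
        rcases eq_or_ne (p %ₘ X ^ (min m n)) 0 with h0 | h0
        · rw [h0]; simpa using (by omega : 0 < min m n)
        · have hlt := Polynomial.degree_modByMonic_lt p (Polynomial.monic_X_pow (R := K) (min m n))
          rw [Polynomial.degree_X_pow] at hlt
          exact (Polynomial.natDegree_lt_iff_degree_lt h0).mpr hlt
      rw [Polynomial.as_sum_range' _ (min m n) hdeg, map_sum]
      apply Submodule.sum_mem
      intro i hi
      rw [← Polynomial.smul_X_eq_monomial, map_smul]
      exact Submodule.smul_mem _ _
        (Submodule.subset_span ⟨⟨i, Finset.mem_range.mp hi⟩, rfl⟩)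
    let eqv : Fin (min m n) ≃ {i : ℕ // m - n < i ∧ i ≤ m} :=
      { toFun := fun j => ⟨m - (j : ℕ), by have := j.2; omega⟩
        invFun := fun i => ⟨m - (i : ℕ), by have h1 := i.2.1; have h2 := i.2.2; omega⟩
        left_inv := fun j => by
          apply Fin.ext
          have := j.2
          show m - (m - (j : ℕ)) = (j : ℕ)
          omega
        right_inv := fun i => by
          apply Subtype.ext
          have h1 := i.2.1; have h2 := i.2.2
          show m - (m - (i : ℕ)) = (i : ℕ)
          omega }
    refine ⟨(Module.Basis.mk hindep hspan).reindex eqv, ?_⟩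
    intro i
    rw [Module.Basis.reindex_apply, Module.Basis.mk_apply]
    show psi K m n ((X : Polynomial K) ^ (m - i.1)) = ybar K m n i.1 i.2.2
    exact psi_X_pow K m n i.1 i.2.2
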